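/- (a) For all integers p, β ≥ 0, the coefficient of q^β in tilde𝔉_p(w,q) lies in w^{νβ−p}·ℚ[[w]], i.e. its order at w = 0 is at least νβ − p. (b) For all integers p, β ≥ 0, the coefficient of q^β in tilde𝔉_p(w,q) − 𝔉_p(w,q) lies in w^{n−p}·ℚ[[w]], i.e. its order at w = 0 is at least n − p. -/

import Mathlib

/-- The Laurent-series variable `w`. -/
noncomputable def Zl : LaurentSeries ℚ := HahnSeries.single (1 : ℤ) (1 : ℚ)

/-- The coefficients `c_{p,l}^{(β)}`. -/
noncomputable def ccoef (n r : ℕ) (d : Fin r → ℕ) (p β : ℕ) (l : ℤ) : ℚ :=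
  if l < 0 then 0 else
    PowerSeries.coeff l.toNat
      (((PowerSeries.X + (β : PowerSeries ℚ)) ^ p *
          ∏ k : Fin r, ∏ i ∈ Finset.range (d k * β),
            ((d k : PowerSeries ℚ) * PowerSeries.X + ((i + 1 : ℕ) : PowerSeries ℚ))) *
        (∏ j ∈ Finset.range β, (PowerSeries.X + ((j + 1 : ℕ) : PowerSeries ℚ)) ^ n)⁻¹)

/-- The operator `𝐃 = 1 + (q/w)·d/dq` on q-series with Laurent-series coefficients. -/
noncomputable def Dop (H : PowerSeries (LaurentSeries ℚ)) : PowerSeries (LaurentSeries ℚ) :=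
  PowerSeries.mk fun β =>
    (1 + HahnSeries.single (-1 : ℤ) ((β : ℕ) : ℚ)) * PowerSeries.coeff β H

namespace Stmt10Aux

open HahnSeries

/-- order at least `t`: all coefficients below `t` vanish. -/
def OAL (x : LaurentSeries ℚ) (t : ℤ) : Prop := ∀ j : ℤ, j < t → x.coeff j = 0

lemma OAL_mono {x : LaurentSeries ℚ} {t t' : ℤ} (h : t' ≤ t) (hx : OAL x t) : OAL x t' :=
  fun j hj => hx j (lt_of_lt_of_le hj h)

lemma OAL_zero (t : ℤ) : OAL 0 t := fun _ _ => rfl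

lemma OAL_add {x y : LaurentSeries ℚ} {t : ℤ} (hx : OAL x t) (hy : OAL y t) :
    OAL (x + y) t := fun j hj => by
  rw [HahnSeries.coeff_add, hx j hj, hy j hj, add_zero]

lemma OAL_neg {x : LaurentSeries ℚ} {t : ℤ} (hx : OAL x t) : OAL (-x) t := fun j hj => by
  rw [HahnSeries.coeff_neg, hx j hj, neg_zero]

lemma OAL_sub {x y : LaurentSeries ℚ} {t : ℤ} (hx : OAL x t) (hy : OAL y t) :
    OAL (x - y) t := by
  rw [sub_eq_add_neg]; exact OAL_add hx (OAL_neg hy)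

lemma OAL_single (a : ℤ) (c : ℚ) : OAL (HahnSeries.single a c) a :=
  fun j hj => HahnSeries.coeff_single_of_ne (ne_of_lt hj)

lemma OAL_one : OAL 1 0 := fun j hj => by
  rw [HahnSeries.coeff_one, if_neg (ne_of_lt hj)]

lemma OAL_mul {x y : LaurentSeries ℚ} {s t : ℤ} (hx : OAL x s) (hy : OAL y t) :
    OAL (x * y) (s + t) := by
  intro j hj
  rw [HahnSeries.coeff_mul]
  refine Finset.sum_eq_zero fun ij hij => ?_
  rw [Finset.mem_addAntidiagonal] at hij
  by_cases h1 : ij.1 < s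
  · rw [hx _ h1, zero_mul]
  · have h2 : ij.2 < t := by omega
    rw [hy _ h2, mul_zero]

lemma OAL_sum {ι : Type*} (s : Finset ι) (f : ι → LaurentSeries ℚ) {t : ℤ}
    (h : ∀ i ∈ s, OAL (f i) t) : OAL (∑ i ∈ s, f i) t :=
  Finset.sum_induction f (fun x => OAL x t) (fun _ _ => OAL_add) (OAL_zero t) h

lemma OAL_pow {x : LaurentSeries ℚ} {t : ℤ} (hx : OAL x t) (k : ℕ) :
    OAL (x ^ k) ((k : ℤ) * t) := by
  induction k with
  | zero => simpa using OAL_mono (le_refl 0) OAL_one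
  | succ k ih =>
      have h := OAL_mul ih hx
      rw [← pow_succ] at h
      have he : ((k : ℤ) * t + t) = ((k + 1 : ℕ) : ℤ) * t := by push_cast; ring
      rw [he] at h
      exact h

lemma OAL_prod {ι : Type*} (s : Finset ι) (f : ι → LaurentSeries ℚ)
    (h : ∀ i ∈ s, OAL (f i) 0) : OAL (∏ i ∈ s, f i) 0 :=
  Finset.prod_induction f (fun x => OAL x 0)
    (fun a b ha hb => by simpa using OAL_mul ha hb) OAL_one h

lemma OAL_ofPS (f : PowerSeries ℚ) : OAL (HahnSeries.ofPowerSeries ℤ ℚ f) 0 := by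
  intro j hj
  rw [HahnSeries.ofPowerSeries_apply]
  apply HahnSeries.embDomain_notin_range
  rintro ⟨m, hm⟩
  have : (m : ℤ) = j := hm
  omega

lemma OAL_natCast (c : ℕ) : OAL ((c : LaurentSeries ℚ)) 0 := by
  rw [← map_natCast (HahnSeries.ofPowerSeries ℤ ℚ) c]
  exact OAL_ofPS _

lemma OAL_Zl : OAL Zl 1 := OAL_single 1 1

lemma OAL_Zl_pow (k : ℕ) : OAL (Zl ^ k) (k : ℤ) := by
  simpa using OAL_pow OAL_Zl k

lemma inv_ofPS (f : PowerSeries ℚ) (hf : PowerSeries.constantCoeff f ≠ 0) :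
    (HahnSeries.ofPowerSeries ℤ ℚ f)⁻¹ = HahnSeries.ofPowerSeries ℤ ℚ f⁻¹ :=
  inv_eq_of_mul_eq_one_right (by rw [← map_mul, PowerSeries.mul_inv_cancel _ hf, map_one])

lemma OAL_inv_ofPS (f : PowerSeries ℚ) (hf : PowerSeries.constantCoeff f ≠ 0) :
    OAL (HahnSeries.ofPowerSeries ℤ ℚ f)⁻¹ 0 := by
  rw [inv_ofPS f hf]; exact OAL_ofPS _

lemma ofPS_ne_zero (f : PowerSeries ℚ) (hf : PowerSeries.constantCoeff f ≠ 0) :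
    HahnSeries.ofPowerSeries ℤ ℚ f ≠ 0 := fun h => by
  apply hf
  have : f = 0 := HahnSeries.ofPowerSeries_injective (by rw [h, map_zero])
  rw [this, map_zero]

/-- the denominator of 𝔉 as a power series -/
noncomputable def BP (n β : ℕ) : PowerSeries ℚ :=
  ∏ j ∈ Finset.range β, (PowerSeries.X + ((j + 1 : ℕ) : PowerSeries ℚ)) ^ n

/-- the denominator of tilde𝔉 as a power series -/
noncomputable def AP (n β : ℕ) : PowerSeries ℚ :=
  ∏ j ∈ Finset.range β, ((PowerSeries.X + ((j + 1 : ℕ) : PowerSeries ℚ)) ^ n - PowerSeries.X ^ n)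

lemma ofPS_BP (n β : ℕ) :
    HahnSeries.ofPowerSeries ℤ ℚ (BP n β) =
      ∏ j ∈ Finset.range β, (Zl + ((j + 1 : ℕ) : LaurentSeries ℚ)) ^ n := by
  rw [BP, map_prod]
  refine Finset.prod_congr rfl fun j _ => ?_
  simp [Zl, map_pow, map_add, map_natCast, HahnSeries.ofPowerSeries_X]

lemma ofPS_AP (n β : ℕ) :
    HahnSeries.ofPowerSeries ℤ ℚ (AP n β) =
      ∏ j ∈ Finset.range β, ((Zl + ((j + 1 : ℕ) : LaurentSeries ℚ)) ^ n - Zl ^ n) := by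
  rw [AP, map_prod]
  refine Finset.prod_congr rfl fun j _ => ?_
  simp [Zl, map_sub, map_pow, map_add, map_natCast, HahnSeries.ofPowerSeries_X]

lemma cc_BP (n β : ℕ) (hn : 1 ≤ n) : PowerSeries.constantCoeff (BP n β) ≠ 0 := by
  rw [BP, map_prod, Finset.prod_ne_zero_iff]
  intro j _
  rw [map_pow, map_add, PowerSeries.constantCoeff_X, zero_add, map_natCast]
  exact pow_ne_zero _ (by exact_mod_cast Nat.succ_ne_zero j)

lemma cc_AP (n β : ℕ) (hn : 1 ≤ n) : PowerSeries.constantCoeff (AP n β) ≠ 0 := by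
  rw [AP, map_prod, Finset.prod_ne_zero_iff]
  intro j _
  rw [map_sub, map_pow, map_pow, map_add, PowerSeries.constantCoeff_X, zero_add,
    zero_pow (by omega : n ≠ 0), sub_zero, map_natCast]
  exact pow_ne_zero _ (by exact_mod_cast Nat.succ_ne_zero j)

/-- order of B - A is at least n -/
lemma OAL_B_sub_A (n β : ℕ) :
    OAL ((∏ j ∈ Finset.range β, (Zl + ((j + 1 : ℕ) : LaurentSeries ℚ)) ^ n)
        - ∏ j ∈ Finset.range β, ((Zl + ((j + 1 : ℕ) : LaurentSeries ℚ)) ^ n - Zl ^ n))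
      (n : ℤ) := by
  induction β with
  | zero => simpa using OAL_zero (n : ℤ)
  | succ β ih =>
      rw [Finset.prod_range_succ, Finset.prod_range_succ]
      have hfac : OAL ((Zl + ((β + 1 : ℕ) : LaurentSeries ℚ)) ^ n) 0 := by
        simpa using OAL_pow (OAL_add (OAL_mono (by norm_num) OAL_Zl) (OAL_natCast (β+1))) n
      have hAf : OAL (∏ j ∈ Finset.range β,
          ((Zl + ((j + 1 : ℕ) : LaurentSeries ℚ)) ^ n - Zl ^ n)) 0 := by
        refine OAL_prod _ _ fun j _ => ?_
        refine OAL_sub ?_ (OAL_mono (by positivity) (OAL_Zl_pow n))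
        simpa using OAL_pow (OAL_add (OAL_mono (by norm_num) OAL_Zl) (OAL_natCast (j+1))) n
      have hkey :
          (∏ j ∈ Finset.range β, (Zl + ((j + 1 : ℕ) : LaurentSeries ℚ)) ^ n) *
              (Zl + ((β + 1 : ℕ) : LaurentSeries ℚ)) ^ n -
            (∏ j ∈ Finset.range β, ((Zl + ((j + 1 : ℕ) : LaurentSeries ℚ)) ^ n - Zl ^ n)) *
              ((Zl + ((β + 1 : ℕ) : LaurentSeries ℚ)) ^ n - Zl ^ n)
          = ((∏ j ∈ Finset.range β, (Zl + ((j + 1 : ℕ) : LaurentSeries ℚ)) ^ n)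
              - ∏ j ∈ Finset.range β, ((Zl + ((j + 1 : ℕ) : LaurentSeries ℚ)) ^ n - Zl ^ n)) *
              (Zl + ((β + 1 : ℕ) : LaurentSeries ℚ)) ^ n +
            (∏ j ∈ Finset.range β, ((Zl + ((j + 1 : ℕ) : LaurentSeries ℚ)) ^ n - Zl ^ n)) *
              Zl ^ n := by ring
      rw [hkey]
      refine OAL_add ?_ ?_
      · simpa using OAL_mul ih hfac
      · simpa using OAL_mul hAf (OAL_Zl_pow n)

/-- coefficient of iterated Dop -/
lemma coeff_Dop_iter (H : PowerSeries (LaurentSeries ℚ)) (l β : ℕ) :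
    PowerSeries.coeff β (Dop^[l] H) =
      (1 + HahnSeries.single (-1 : ℤ) ((β : ℕ) : ℚ)) ^ l *
        PowerSeries.coeff β H := by
  induction l with
  | zero => simp
  | succ l ih =>
      rw [Function.iterate_succ_apply', Dop, PowerSeries.coeff_mk, ih, pow_succ]
      ring

lemma OAL_Dop_pow (l β₂ : ℕ) :
    OAL ((1 + HahnSeries.single (-1 : ℤ) ((β₂ : ℕ) : ℚ)) ^ l) (-(l : ℤ)) := by
  have hbase : OAL (1 + HahnSeries.single (-1 : ℤ) ((β₂ : ℕ) : ℚ)) (-1) :=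
    OAL_add (OAL_mono (by norm_num) OAL_one) (OAL_single _ _)
  simpa using OAL_pow hbase l

end Stmt10Aux

open Stmt10Aux in
theorem stmt10 (n r : ℕ) (hr : 1 ≤ r) (d : Fin r → ℕ) (hd : ∀ k, 2 ≤ d k)
    (m D : ℕ) (hm : m = ∑ k, d k) (hD : D = ∏ k, d k ^ d k)
    (ν : ℕ) (hν : ν = n - m) (hmn : m < n)
    -- the coefficients c̃_{p,l}^{(β)}
    (ct : ℕ → ℤ → ℕ → ℚ)
    (hct0 : ∀ (p : ℕ) (l : ℤ), ct p l 0 = if l = (p : ℤ) then 1 else 0)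
    (hctz : ∀ (p : ℕ) (l : ℤ) (β : ℕ),
      (l < 0 ∨ (p : ℤ) - (ν : ℤ) * (β : ℤ) < l) → ct p l β = 0)
    (hctrec : ∀ (p : ℕ) (l : ℤ) (β : ℕ), 1 ≤ β → 0 ≤ l → l ≤ (p : ℤ) - (ν : ℤ) * (β : ℤ) →
      ct p l β = -∑ β₁ ∈ Finset.range β, ∑ k ∈ Finset.Icc (0 : ℤ) ((p : ℤ) - (ν : ℤ) * (β₁ : ℤ)),
        ct p k β₁ * ccoef n r d k.toNat (β - β₁) l)
    -- the series tilde𝔉(w,q) and 𝔉(w,q)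
    (tF F : PowerSeries (LaurentSeries ℚ))
    (htF : ∀ β : ℕ, PowerSeries.coeff β tF =
      Zl ^ (ν * β) *
        (∏ k : Fin r, ∏ i ∈ Finset.range (d k * β),
          ((d k : LaurentSeries ℚ) * Zl + ((i + 1 : ℕ) : LaurentSeries ℚ))) /
        ∏ j ∈ Finset.range β, ((Zl + ((j + 1 : ℕ) : LaurentSeries ℚ)) ^ n - Zl ^ n))
    (hF : ∀ β : ℕ, PowerSeries.coeff β F =
      Zl ^ (ν * β) *
        (∏ k : Fin r, ∏ i ∈ Finset.range (d k * β),
          ((d k : LaurentSeries ℚ) * Zl + ((i + 1 : ℕ) : LaurentSeries ℚ))) /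
        ∏ j ∈ Finset.range β, (Zl + ((j + 1 : ℕ) : LaurentSeries ℚ)) ^ n)
    -- tilde𝔉_p(w,q) and 𝔉_p(w,q)
    (tFp Fp : ℕ → PowerSeries (LaurentSeries ℚ))
    (htFp : ∀ p : ℕ, tFp p =
      ∑ β ∈ Finset.range (p / ν + 1), ∑ l ∈ Finset.range (p - ν * β + 1),
        PowerSeries.C
            (HahnSeries.single (-((p : ℤ) - (ν : ℤ) * (β : ℤ) - (l : ℤ))) (ct p (l : ℤ) β)) *
          PowerSeries.X ^ β * Dop^[l] tF)
    (hFp : ∀ p : ℕ, Fp p =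
      ∑ β ∈ Finset.range (p / ν + 1), ∑ l ∈ Finset.range (p - ν * β + 1),
        PowerSeries.C
            (HahnSeries.single (-((p : ℤ) - (ν : ℤ) * (β : ℤ) - (l : ℤ))) (ct p (l : ℤ) β)) *
          PowerSeries.X ^ β * Dop^[l] F) :
    -- (a) the q^β-coefficient of tilde𝔉_p has w-order at least νβ − p
    (∀ (p β : ℕ) (j : ℤ), j < (ν : ℤ) * (β : ℤ) - (p : ℤ) →
      (PowerSeries.coeff β (tFp p)).coeff j = 0)
    ∧
    -- (b) the q^β-coefficient of tilde𝔉_p − 𝔉_p has w-order at least n − p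
    (∀ (p β : ℕ) (j : ℤ), j < (n : ℤ) - (p : ℤ) →
      (PowerSeries.coeff β (tFp p - Fp p)).coeff j = 0) := by
  have hn1 : 1 ≤ n := by omega
  -- order bound for the numerator
  have hnumO : ∀ β₂ : ℕ, OAL (Zl ^ (ν * β₂) * ∏ k : Fin r, ∏ i ∈ Finset.range (d k * β₂),
      ((d k : LaurentSeries ℚ) * Zl + ((i + 1 : ℕ) : LaurentSeries ℚ))) ((ν : ℤ) * β₂) := by
    intro β₂
    have hp : OAL (∏ k : Fin r, ∏ i ∈ Finset.range (d k * β₂),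
        ((d k : LaurentSeries ℚ) * Zl + ((i + 1 : ℕ) : LaurentSeries ℚ))) 0 := by
      refine OAL_prod _ _ fun k _ => OAL_prod _ _ fun i _ => ?_
      exact OAL_add (OAL_mono (by norm_num) (OAL_mul (OAL_natCast (d k)) OAL_Zl))
        (OAL_natCast (i + 1))
    have h := OAL_mul (OAL_Zl_pow (ν * β₂)) hp
    refine OAL_mono (le_of_eq ?_) h
    push_cast; ring
  -- order bound for coefficients of tF
  have htFO : ∀ β₂ : ℕ, OAL (PowerSeries.coeff β₂ tF) ((ν : ℤ) * β₂) := by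
    intro β₂
    rw [htF β₂, div_eq_mul_inv, ← ofPS_AP n β₂]
    have h := OAL_mul (hnumO β₂) (OAL_inv_ofPS _ (cc_AP n β₂ hn1))
    simpa using h
  -- order bound for coefficients of tF - F
  have hdiffO : ∀ β₂ : ℕ, OAL (PowerSeries.coeff β₂ tF -
      PowerSeries.coeff β₂ F) ((n : ℤ)) := by
    intro β₂
    rw [htF β₂, hF β₂, ← ofPS_AP n β₂, ← ofPS_BP n β₂]
    set N := Zl ^ (ν * β₂) * ∏ k : Fin r, ∏ i ∈ Finset.range (d k * β₂),
      ((d k : LaurentSeries ℚ) * Zl + ((i + 1 : ℕ) : LaurentSeries ℚ)) with hN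
    have hA0 := ofPS_ne_zero _ (cc_AP n β₂ hn1)
    have hB0 := ofPS_ne_zero _ (cc_BP n β₂ hn1)
    have hid : N / (HahnSeries.ofPowerSeries ℤ ℚ (AP n β₂)) -
        N / (HahnSeries.ofPowerSeries ℤ ℚ (BP n β₂)) =
        N * ((HahnSeries.ofPowerSeries ℤ ℚ (BP n β₂)) -
            (HahnSeries.ofPowerSeries ℤ ℚ (AP n β₂))) *
          ((HahnSeries.ofPowerSeries ℤ ℚ (AP n β₂)) *
            (HahnSeries.ofPowerSeries ℤ ℚ (BP n β₂)))⁻¹ := by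
      field_simp
    rw [hid]
    have hBA : OAL ((HahnSeries.ofPowerSeries ℤ ℚ (BP n β₂)) -
        (HahnSeries.ofPowerSeries ℤ ℚ (AP n β₂))) (n : ℤ) := by
      rw [ofPS_AP, ofPS_BP]; exact OAL_B_sub_A n β₂
    have hinv : OAL ((HahnSeries.ofPowerSeries ℤ ℚ (AP n β₂)) *
        (HahnSeries.ofPowerSeries ℤ ℚ (BP n β₂)))⁻¹ 0 := by
      rw [← map_mul]
      refine OAL_inv_ofPS _ ?_
      rw [map_mul]
      exact mul_ne_zero (cc_AP n β₂ hn1) (cc_BP n β₂ hn1)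
    have h := OAL_mul (OAL_mul (hnumO β₂) hBA) hinv
    refine OAL_mono ?_ h
    have h2 : (0 : ℤ) ≤ (ν : ℤ) * β₂ := by positivity
    linarith
  -- coefficient formula for the double sums
  have hcoeff : ∀ (G : PowerSeries (LaurentSeries ℚ)) (p β : ℕ),
      PowerSeries.coeff β
        (∑ β₁ ∈ Finset.range (p / ν + 1), ∑ l ∈ Finset.range (p - ν * β₁ + 1),
          PowerSeries.C
              (HahnSeries.single (-((p : ℤ) - (ν : ℤ) * (β₁ : ℤ) - (l : ℤ))) (ct p (l : ℤ) β₁)) *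
            PowerSeries.X ^ β₁ * Dop^[l] G)
      = ∑ β₁ ∈ Finset.range (p / ν + 1), ∑ l ∈ Finset.range (p - ν * β₁ + 1),
          HahnSeries.single (-((p : ℤ) - (ν : ℤ) * (β₁ : ℤ) - (l : ℤ))) (ct p (l : ℤ) β₁) *
            (if β₁ ≤ β then
              (1 + HahnSeries.single (-1 : ℤ) (((β - β₁ : ℕ)) : ℚ)) ^ l *
                PowerSeries.coeff (β - β₁) G
             else 0) := by
    intro G p β
    rw [map_sum]
    refine Finset.sum_congr rfl fun β₁ _ => ?_
    rw [map_sum]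
    refine Finset.sum_congr rfl fun l _ => ?_
    rw [mul_assoc, PowerSeries.coeff_C_mul, PowerSeries.coeff_X_pow_mul', coeff_Dop_iter]
  constructor
  · -- part (a)
    intro p β j hj
    have key : OAL (PowerSeries.coeff β (tFp p))
        ((ν : ℤ) * (β : ℤ) - (p : ℤ)) := by
      rw [htFp p, hcoeff tF p β]
      refine OAL_sum _ _ fun β₁ _ => OAL_sum _ _ fun l _ => ?_
      by_cases hb : β₁ ≤ β
      · rw [if_pos hb]
        have h1 := OAL_mul (OAL_single (-((p : ℤ) - (ν : ℤ) * (β₁ : ℤ) - (l : ℤ)))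
          (ct p (l : ℤ) β₁)) (OAL_mul (OAL_Dop_pow l (β - β₁)) (htFO (β - β₁)))
        refine OAL_mono (le_of_eq ?_) h1
        rw [Nat.cast_sub hb]
        push_cast; ring
      · rw [if_neg hb, mul_zero]
        exact OAL_zero _
    exact key j hj
  · -- part (b)
    intro p β j hj
    have key : OAL (PowerSeries.coeff β (tFp p - Fp p))
        ((n : ℤ) - (p : ℤ)) := by
      rw [map_sub, htFp p, hFp p, hcoeff tF p β, hcoeff F p β, ← Finset.sum_sub_distrib]
      refine OAL_sum _ _ fun β₁ _ => ?_
      rw [← Finset.sum_sub_distrib]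
      refine OAL_sum _ _ fun l _ => ?_
      rw [← mul_sub]
      by_cases hb : β₁ ≤ β
      · rw [if_pos hb, if_pos hb, ← mul_sub]
        have h1 := OAL_mul (OAL_single (-((p : ℤ) - (ν : ℤ) * (β₁ : ℤ) - (l : ℤ)))
          (ct p (l : ℤ) β₁)) (OAL_mul (OAL_Dop_pow l (β - β₁)) (hdiffO (β - β₁)))
        refine OAL_mono ?_ h1
        have h2 : (0 : ℤ) ≤ (ν : ℤ) * (β₁ : ℤ) := by positivity
        linarith
      · rw [if_neg hb, if_neg hb, sub_zero, mul_zero]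
        exact OAL_zero _
    exact key j hj
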